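/- Let λ be a weakly decreasing tuple of nonnegative integers of length n > 2, λ' = (λ_2,…,λ_n), λ'' = (λ_3,…,λ_n), and for 2 ≤ i ≤ n set O_i = ((x_i − t x_1)·x_i^{λ_1} − (x_1 − t x_i)·x_1^{λ_1−λ_2}·x_i^{λ_2}) / (x_i − t x_1). Then, in F, P_λ(x;t) = Σ_{i=2}^n O_i · ∏_{1≤a≤n, a≠i}(x_i − t x_a)/(x_i − x_a) · ζ_i(P_{λ'}(x;t)) − x_1^{λ_1−λ_2} · Σ_{i=2}^n Σ_{2≤j≤n, j≠i} t·x_i^{λ_2}·x_j^{λ_2} · ∏_{1≤a≤n, a≠1,i}(x_i − t x_a)/(x_i − x_a) · ∏_{1≤a≤n, a≠1,i,j}(x_j − t x_a)/(x_j − x_a) · ζ_{i,j}(P_{λ''}(x;t)). -/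

import Mathlib

open MvPolynomial Finset

noncomputable section

abbrev Rr : Type := MvPolynomial (Fin 2 ⊕ ℕ) ℚ

abbrev F : Type := FractionRing Rr

/-- The variable `q`. -/
def q : F := algebraMap Rr F (X (Sum.inl 0))

/-- The variable `t`. -/
def t : F := algebraMap Rr F (X (Sum.inl 1))

/-- `x k` is the variable `x_{k+1}` of the paper (0-indexed). -/
def x (k : ℕ) : F := algebraMap Rr F (X (Sum.inr k))

/-- Substitution endomorphism of `F` induced by an injective map of variables. -/
def subF (g : Fin 2 ⊕ ℕ → Fin 2 ⊕ ℕ) (hg : Function.Injective g) : F →+* F :=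
  IsFractionRing.lift (g := (algebraMap Rr F).comp (rename g).toRingHom)
    (by
      rw [RingHom.coe_comp]
      exact (IsFractionRing.injective Rr F).comp (rename_injective g hg))

def permNat (n : ℕ) (σ : Equiv.Perm (Fin n)) : ℕ → ℕ :=
  fun k => if h : k < n then (σ ⟨k, h⟩ : ℕ) else k

lemma permNat_inj (n : ℕ) (σ : Equiv.Perm (Fin n)) : Function.Injective (permNat n σ) := by
  intro a b hab
  unfold permNat at hab
  split_ifs at hab with h1 h2 h2
  · have := σ.injective (Fin.val_injective hab)
    exact congrArg Fin.val this
  · have := (σ ⟨a, h1⟩).isLt; omega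
  · have := (σ ⟨b, h2⟩).isLt; omega
  · exact hab

/-- The action of a permutation `σ ∈ S_n` on `F`, permuting `x_1, …, x_n`. -/
def pact (n : ℕ) (σ : Equiv.Perm (Fin n)) : F →+* F :=
  subF (Sum.map id (permNat n σ)) (Function.injective_id.sumMap (permNat_inj n σ))

def shiftNat (i : ℕ) : ℕ → ℕ := fun k => if k < i then k else k + 1

lemma shiftNat_inj (i : ℕ) : Function.Injective (shiftNat i) := by
  intro a b; unfold shiftNat; split_ifs <;> omega

/-- `zeta i` is the endomorphism `ζ_{i+1}` of the paper: it fixes `q`, `t` and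
`x k` for `k < i`, and sends `x k` to `x (k+1)` for `k ≥ i` (0-indexed). -/
def zeta (i : ℕ) : F →+* F :=
  subF (Sum.map id (shiftNat i)) (Function.injective_id.sumMap (shiftNat_inj i))

/-- `zetaP i j` is `ζ_{i+1,j+1}` of the paper. -/
def zetaP (i j : ℕ) : F →+* F := (zeta (max i j)).comp (zeta (min i j))

/-- The Hall–Littlewood polynomial `P_λ(x; t)` in `n` variables. -/
def HL (n : ℕ) (lam : Fin n → ℕ) : F :=
  ∑ σ : Equiv.Perm (Fin n), pact n σ
    ((∏ i : Fin n, x i.val ^ lam i) *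
      ∏ i : Fin n, ∏ j ∈ Finset.Ioi i, (x i.val - t * x j.val) / (x i.val - x j.val))

/-- `ρ_n`, 0-indexed: `rho n i = n - 1 - i`. -/
def rho (n : ℕ) : Fin n → ℕ := fun i => n - 1 - i.val

/-- The deformed Weyl denominator `Δ_n(c) = ∏_{i<j} (x_i - c x_j)`. -/
def DeltaQ (n : ℕ) (c : F) : F := ∏ i : Fin n, ∏ j ∈ Finset.Ioi i, (x i.val - c * x j.val)

/-- The Schur polynomial `s_λ(x) = Σ_σ σ(x^{λ+ρ}/Δ_n)`. -/
def Schur (n : ℕ) (lam : Fin n → ℕ) : F :=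
  ∑ σ : Equiv.Perm (Fin n), pact n σ
    ((∏ i : Fin n, x i.val ^ (lam i + rho n i)) / DeltaQ n 1)

/-- `GT2 n α` is the set of tuples `μ` of length `n` with `α_{i+1} ≤ μ_i ≤ α_i`. -/
def GT2 (n : ℕ) (α : Fin (n+1) → ℕ) : Finset (Fin n → ℕ) :=
  Fintype.piFinset (fun i => Finset.Icc (α i.succ) (α i.castSucc))

def GLw (y a : ℕ) : F := if y = a then -q else if y + 1 = a then t else 0

def GRw (y b : ℕ) : F := if y = b then 1 else if y = b + 1 then -q * t else 0

/-- `w(μ_j)` where `a1 = α_j`, `a2 = α_{j+1}`, `m = μ_j`. -/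
def wgt (a1 a2 m : ℕ) : F :=
  (if m = a1 ∨ m = a2 then 0 else (1 - q) * (1 - t)) + GLw m a1 + GRw m a2

/-- The tridiagonal determinant `M(α; μ)`. -/
def Mdet (n : ℕ) (α : Fin (n+1) → ℕ) (μ : Fin n → ℕ) : F :=
  Matrix.det (Matrix.of fun i j : Fin n =>
    if i = j then wgt (α i.castSucc) (α i.succ) (μ i)
    else if (i : ℕ) + 1 = (j : ℕ) then 1
    else if (j : ℕ) + 1 = (i : ℕ) then GRw (μ j) (α i.castSucc) * GLw (μ i) (α i.castSucc)
    else 0)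

def tot {n : ℕ} (f : Fin n → ℕ) : ℕ := ∑ i, f i


section Infra

lemma subF_algebraMap (g : Fin 2 ⊕ ℕ → Fin 2 ⊕ ℕ) (hg : Function.Injective g) (p : Rr) :
    subF g hg (algebraMap Rr F p) = algebraMap Rr F (rename g p) :=
  IsFractionRing.lift_algebraMap _ p

lemma subF_x (f : ℕ → ℕ) (hf) (k : ℕ) : subF (Sum.map id f) hf (x k) = x (f k) := by
  rw [x, subF_algebraMap, rename_X]; rfl

lemma subF_t (f : ℕ → ℕ) (hf) : subF (Sum.map id f) hf t = t := by
  rw [t, subF_algebraMap, rename_X]; rfl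

lemma subF_comp (g g' : Fin 2 ⊕ ℕ → Fin 2 ⊕ ℕ) (hg : Function.Injective g)
    (hg' : Function.Injective g') :
    (subF g hg).comp (subF g' hg') = subF (g ∘ g') (hg.comp hg') := by
  apply IsLocalization.ringHom_ext (nonZeroDivisors Rr)
  refine RingHom.ext fun p => ?_
  simp only [RingHom.coe_comp, Function.comp_apply, subF_algebraMap, rename_rename]

lemma subF_congr {g g' : Fin 2 ⊕ ℕ → Fin 2 ⊕ ℕ} (h : g = g') (hg : Function.Injective g) :
    subF g hg = subF g' (h ▸ hg) := by subst h; rfl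

lemma sum_map_id_comp (f f' : ℕ → ℕ) :
    Sum.map (id : Fin 2 → Fin 2) f ∘ Sum.map id f' = Sum.map id (f ∘ f') := by
  ext k; cases k <;> rfl

lemma zeta_x (i k : ℕ) : zeta i (x k) = x (shiftNat i k) := subF_x _ _ k
lemma zeta_t (i : ℕ) : zeta i t = t := subF_t _ _
lemma pact_x (n : ℕ) (σ : Equiv.Perm (Fin n)) (k : ℕ) :
    pact n σ (x k) = x (permNat n σ k) := subF_x _ _ k
lemma pact_t (n : ℕ) (σ : Equiv.Perm (Fin n)) : pact n σ t = t := subF_t _ _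

lemma zeta_comp_zeta (i k : ℕ) : (zeta i).comp (zeta k) = zetaP i (shiftNat i k) := by
  have h : (shiftNat i) ∘ (shiftNat k) =
      (shiftNat (max i (shiftNat i k))) ∘ (shiftNat (min i (shiftNat i k))) := by
    funext v
    simp only [shiftNat, Function.comp, Nat.max_def, Nat.min_def]
    split_ifs <;> omega
  unfold zetaP zeta
  rw [subF_comp, subF_comp]
  exact subF_congr (by rw [sum_map_id_comp, sum_map_id_comp, h]) _

lemma zetaP_comm (i j : ℕ) : zetaP i j = zetaP j i := by
  unfold zetaP; rw [max_comm, min_comm]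

end Infra
section Nonzero

lemma x_sub_x_ne_zero {i j : ℕ} (h : i ≠ j) : x i - x j ≠ 0 := by
  have hx : x i - x j = algebraMap Rr F (X (Sum.inr i) - X (Sum.inr j)) := by
    simp [x, map_sub]
  rw [hx]
  intro hc
  have h0 : (X (Sum.inr i) - X (Sum.inr j) : Rr) = 0 :=
    IsFractionRing.injective Rr F (by simpa using hc)
  have := congrArg (aeval (Sum.elim (fun _ => (0:ℚ))
    (fun k => if k = i then (1:ℚ) else 0))) h0
  simp [Ne.symm h] at this

lemma x_sub_t_mul_x_ne_zero (i j : ℕ) : x i - t * x j ≠ 0 := by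
  have hx : x i - t * x j
      = algebraMap Rr F (X (Sum.inr i) - X (Sum.inl 1) * X (Sum.inr j)) := by
    simp [x, t, map_sub, map_mul]
  rw [hx]
  intro hc
  have h0 : (X (Sum.inr i) - X (Sum.inl 1) * X (Sum.inr j) : Rr) = 0 :=
    IsFractionRing.injective Rr F (by simpa using hc)
  have := congrArg (aeval (Sum.elim (fun _ => (0:ℚ)) (fun _ => (1:ℚ)))) h0
  simp at this

end Nonzero

section InsPerm

def insPerm (n : ℕ) (i : Fin (n+1)) (τ : Equiv.Perm (Fin n)) : Equiv.Perm (Fin (n+1)) :=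
  (finSuccEquiv n).trans ((Equiv.optionCongr τ).trans (finSuccEquiv' i).symm)

lemma insPerm_zero (n : ℕ) (i : Fin (n+1)) (τ : Equiv.Perm (Fin n)) :
    insPerm n i τ 0 = i := by
  simp [insPerm, finSuccEquiv_zero, finSuccEquiv'_symm_none]

lemma insPerm_succ (n : ℕ) (i : Fin (n+1)) (τ : Equiv.Perm (Fin n)) (j : Fin n) :
    insPerm n i τ j.succ = i.succAbove (τ j) := by
  simp [insPerm, finSuccEquiv_succ, finSuccEquiv'_symm_some]

lemma insPerm_bij (n : ℕ) :
    Function.Bijective (fun p : Fin (n+1) × Equiv.Perm (Fin n) => insPerm n p.1 p.2) := by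
  rw [Fintype.bijective_iff_injective_and_card]
  constructor
  · rintro ⟨i, τ⟩ ⟨i', τ'⟩ hp
    simp only at hp
    have hi : i = i' := by
      rw [← insPerm_zero n i τ, hp, insPerm_zero]
    subst hi
    have hτ : τ = τ' := by
      ext j
      have h1 : insPerm n i τ j.succ = insPerm n i τ' j.succ := by rw [hp]
      rw [insPerm_succ, insPerm_succ] at h1
      have := Fin.succAbove_right_injective (p := i) h1
      exact congrArg Fin.val this
    rw [hτ]
  · simp [Fintype.card_perm, Nat.factorial_succ]

lemma pact_insPerm_comp_zeta0 (n : ℕ) (i : Fin (n+1)) (τ : Equiv.Perm (Fin n)) :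
    (pact (n+1) (insPerm n i τ)).comp (zeta 0) = (zeta i.val).comp (pact n τ) := by
  have key : permNat (n+1) (insPerm n i τ) ∘ shiftNat 0
      = shiftNat i.val ∘ permNat n τ := by
    funext k
    simp only [Function.comp_apply]
    by_cases hk : k < n
    · have h1 : shiftNat 0 k = k + 1 := by simp [shiftNat]
      have hk1 : k + 1 < n + 1 := by omega
      have h2 : permNat (n+1) (insPerm n i τ) (k+1) = ((insPerm n i τ) ⟨k+1, hk1⟩ : ℕ) := by
        simp [permNat, hk1]
      have h3 : (⟨k+1, hk1⟩ : Fin (n+1)) = (⟨k, hk⟩ : Fin n).succ := rfl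
      rw [h1, h2, h3, insPerm_succ]
      have h4 : permNat n τ k = (τ ⟨k, hk⟩ : ℕ) := by simp [permNat, hk]
      rw [h4]
      rcases lt_or_ge ((τ ⟨k, hk⟩ : Fin n) : ℕ) i.val with h | h
      · rw [Fin.succAbove_of_castSucc_lt _ _ (by simpa [Fin.lt_def] using h)]
        simp [shiftNat, h]
      · rw [Fin.succAbove_of_le_castSucc _ _ (by simpa [Fin.le_def] using h)]
        simp [shiftNat, Nat.not_lt.mpr h]
    · have h1 : shiftNat 0 k = k + 1 := by simp [shiftNat]
      have h2 : permNat (n+1) (insPerm n i τ) (k+1) = k + 1 := by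
        simp [permNat]; omega
      have h3 : permNat n τ k = k := by simp [permNat, hk]
      have h4 : shiftNat i.val k = k + 1 := by
        have := i.isLt
        simp [shiftNat]; omega
      rw [h1, h2, h3, h4]
  unfold pact zeta
  rw [subF_comp, subF_comp]
  exact subF_congr (by rw [sum_map_id_comp, sum_map_id_comp, key]) _

end InsPerm
section Rec

lemma HL_rec (n : ℕ) (lam : Fin (n+1) → ℕ) :
    HL (n+1) lam = ∑ i ∈ Finset.range (n+1),
      x i ^ lam 0 *
      (∏ a ∈ (Finset.range (n+1)).erase i, (x i - t * x a) / (x i - x a)) *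
      zeta i (HL n (fun j => lam j.succ)) := by
  have hs : ∀ k, shiftNat 0 k = k + 1 := fun k => by simp [shiftNat]
  set lam' : Fin n → ℕ := fun j => lam j.succ with hlam'
  set Wn : F := (∏ i : Fin n, x i.val ^ lam' i) *
      ∏ i : Fin n, ∏ j ∈ Finset.Ioi i, (x i.val - t * x j.val) / (x i.val - x j.val) with hWn
  have hzW : zeta 0 Wn = (∏ i : Fin n, x (i.val+1) ^ lam' i) *
      ∏ i : Fin n, ∏ j ∈ Finset.Ioi i,
        (x (i.val+1) - t * x (j.val+1)) / (x (i.val+1) - x (j.val+1)) := by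
    rw [hWn, map_mul, map_prod, map_prod]
    congr 1
    · exact Finset.prod_congr rfl fun i _ => by rw [map_pow, zeta_x, hs]
    · refine Finset.prod_congr rfl fun i _ => ?_
      rw [map_prod]
      refine Finset.prod_congr rfl fun j _ => ?_
      rw [map_div₀, map_sub, map_sub, map_mul, zeta_x, zeta_x, zeta_t, hs, hs]
  have hW : (∏ i : Fin (n+1), x i.val ^ lam i) *
      ∏ i : Fin (n+1), ∏ j ∈ Finset.Ioi i, (x i.val - t * x j.val) / (x i.val - x j.val)
      = (x 0 ^ lam 0 * ∏ j : Fin n, (x 0 - t * x (j.val+1)) / (x 0 - x (j.val+1)))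
        * zeta 0 Wn := by
    rw [hzW]
    rw [Fin.prod_univ_succ (f := fun i : Fin (n+1) => x i.val ^ lam i)]
    rw [Fin.prod_univ_succ (f := fun i : Fin (n+1) =>
      ∏ j ∈ Finset.Ioi i, (x i.val - t * x j.val) / (x i.val - x j.val))]
    simp only [Fin.prod_Ioi_zero, Fin.prod_Ioi_succ, Fin.val_succ, Fin.val_zero]
    ring
  have hHL' : HL n lam' = ∑ τ : Equiv.Perm (Fin n), pact n τ Wn := by
    rw [HL, hWn]
  rw [HL]
  rw [Finset.sum_congr rfl fun σ _ => by rw [hW, map_mul]]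
  rw [← Fintype.sum_bijective _ (insPerm_bij n)
    (fun p : Fin (n+1) × Equiv.Perm (Fin n) =>
      pact (n+1) (insPerm n p.1 p.2)
          (x 0 ^ lam 0 * ∏ j : Fin n, (x 0 - t * x (j.val+1)) / (x 0 - x (j.val+1))) *
        pact (n+1) (insPerm n p.1 p.2) (zeta 0 Wn)) _ (fun p => rfl)]
  rw [Fintype.sum_prod_type]
  have hterm : ∀ (i : Fin (n+1)) (τ : Equiv.Perm (Fin n)),
      pact (n+1) (insPerm n i τ)
          (x 0 ^ lam 0 * ∏ j : Fin n, (x 0 - t * x (j.val+1)) / (x 0 - x (j.val+1))) *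
        pact (n+1) (insPerm n i τ) (zeta 0 Wn)
      = (x i.val ^ lam 0 *
          ∏ a ∈ (Finset.range (n+1)).erase i.val,
            (x i.val - t * x a) / (x i.val - x a)) *
        zeta i.val (pact n τ Wn) := by
    intro i τ
    have hp0 : permNat (n+1) (insPerm n i τ) 0 = i.val := by
      simp [permNat, insPerm_zero]
    have hpj : ∀ j : Fin n, permNat (n+1) (insPerm n i τ) (j.val+1)
        = (i.succAbove (τ j)).val := by
      intro j
      have hj1 : j.val + 1 < n + 1 := by omega
      have h3 : (⟨j.val+1, hj1⟩ : Fin (n+1)) = j.succ := rfl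
      simp only [permNat, dif_pos hj1, h3, insPerm_succ]
    refine congrArg₂ (· * ·) ?_ ?_
    · rw [map_mul, map_pow, pact_x, hp0]
      refine congrArg₂ (· * ·) rfl ?_
      rw [map_prod]
      rw [Finset.prod_congr rfl (fun j _ => by
        rw [map_div₀, map_sub, map_sub, map_mul, pact_x, pact_x, pact_t, hp0, hpj])]
      refine Finset.prod_bij (fun j _ => (i.succAbove (τ j)).val) ?_ ?_ ?_ ?_
      · intro j _
        rw [Finset.mem_erase]
        refine ⟨fun hc => Fin.succAbove_ne i (τ j) (Fin.val_injective hc), ?_⟩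
        rw [Finset.mem_range]
        exact (i.succAbove (τ j)).isLt
      · intro a _ b _ hab
        exact τ.injective (Fin.succAbove_right_injective (Fin.val_injective hab))
      · intro b hb
        rw [Finset.mem_erase, Finset.mem_range] at hb
        obtain ⟨z, hz⟩ := Fin.exists_succAbove_eq
          (show (⟨b, hb.2⟩ : Fin (n+1)) ≠ i from fun hc => hb.1 (by
            simpa using congrArg Fin.val hc))
        exact ⟨τ.symm z, Finset.mem_univ _, by simp [hz]⟩
      · intro j _
        rfl
    · exact RingHom.congr_fun (pact_insPerm_comp_zeta0 n i τ) Wn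
  rw [Finset.sum_congr rfl fun i _ => Finset.sum_congr rfl fun τ _ => hterm i τ]
  rw [Finset.sum_congr rfl fun (i : Fin (n+1)) _ => by
    rw [← Finset.mul_sum, ← map_sum, ← hHL']]
  exact Fin.sum_univ_eq_sum_range (fun i => x i ^ lam 0 *
      (∏ a ∈ (Finset.range (n+1)).erase i, (x i - t * x a) / (x i - x a)) *
      zeta i (HL n lam')) (n+1)

end Rec
section ZetaHL

lemma shiftNat_lt {i k n : ℕ} (h : k < n+1) (hi : i < n+2) : shiftNat i k < n+2 := by
  unfold shiftNat; split_ifs <;> omega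

lemma shiftNat_ne (i k : ℕ) : shiftNat i k ≠ i := by
  unfold shiftNat; split_ifs <;> omega

lemma shiftNat_preimage {i b : ℕ} (hb : b ≠ i) :
    shiftNat i (if b < i then b else b - 1) = b := by
  unfold shiftNat; split_ifs <;> omega

lemma zeta_HL_rec (n : ℕ) (lam : Fin (n+1) → ℕ) (i : ℕ) (hi : i < n + 2) :
    zeta i (HL (n+1) lam) = ∑ j ∈ (Finset.range (n+2)).erase i,
      x j ^ lam 0 *
      (∏ a ∈ ((Finset.range (n+2)).erase i).erase j, (x j - t * x a) / (x j - x a)) *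
      zetaP i j (HL n (fun k => lam k.succ)) := by
  rw [HL_rec, map_sum]
  refine Finset.sum_bij (fun k _ => shiftNat i k) ?_ ?_ ?_ ?_
  · intro k hk
    rw [Finset.mem_range] at hk
    rw [Finset.mem_erase, Finset.mem_range]
    exact ⟨shiftNat_ne i k, shiftNat_lt hk hi⟩
  · intro a _ b _ hab
    exact shiftNat_inj i hab
  · intro b hb
    rw [Finset.mem_erase, Finset.mem_range] at hb
    refine ⟨if b < i then b else b - 1, ?_, shiftNat_preimage hb.1⟩
    rw [Finset.mem_range]
    split_ifs <;> omega
  · intro k hk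
    rw [Finset.mem_range] at hk
    rw [map_mul, map_mul, map_pow, zeta_x]
    congr 1
    · congr 1
      rw [map_prod]
      rw [Finset.prod_congr rfl (fun a _ => by
        rw [map_div₀, map_sub, map_sub, map_mul, zeta_x, zeta_x, zeta_t])]
      refine Finset.prod_bij (fun a _ => shiftNat i a) ?_ ?_ ?_ ?_
      · intro a ha
        rw [Finset.mem_erase, Finset.mem_range] at ha
        rw [Finset.mem_erase, Finset.mem_erase, Finset.mem_range]
        exact ⟨fun hc => ha.1 (shiftNat_inj i hc), shiftNat_ne i a,
          shiftNat_lt ha.2 hi⟩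
      · intro a _ b _ hab
        exact shiftNat_inj i hab
      · intro b hb
        rw [Finset.mem_erase, Finset.mem_erase, Finset.mem_range] at hb
        refine ⟨if b < i then b else b - 1, ?_, shiftNat_preimage hb.2.1⟩
        rw [Finset.mem_erase, Finset.mem_range]
        constructor
        · intro hc
          exact hb.1 (by rw [← shiftNat_preimage hb.2.1, hc])
        · split_ifs <;> omega
      · intro a _
        rfl
    · exact RingHom.congr_fun (zeta_comp_zeta i k) _

end ZetaHL

section Utils

lemma range_erase_zero (n : ℕ) : (Finset.range (n+2)).erase 0 = Finset.Icc 1 (n+1) := by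
  ext a
  simp only [Finset.mem_erase, Finset.mem_range, Finset.mem_Icc]
  omega

lemma sum_pair_swap {E : Finset ℕ} (H : ℕ → ℕ → F) :
    ∑ i ∈ E, ∑ j ∈ E.erase i, H i j = ∑ i ∈ E, ∑ j ∈ E.erase i, H j i := by
  rw [Finset.sum_sigma', Finset.sum_sigma']
  refine Finset.sum_nbij' (fun p => ⟨p.2, p.1⟩) (fun p => ⟨p.2, p.1⟩) ?_ ?_ ?_ ?_ ?_
  · rintro ⟨a, b⟩ hp
    simp only [Finset.mem_sigma, Finset.mem_erase] at hp ⊢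
    exact ⟨hp.2.2, fun hc => hp.2.1 hc.symm, hp.1⟩
  · rintro ⟨a, b⟩ hp
    simp only [Finset.mem_sigma, Finset.mem_erase] at hp ⊢
    exact ⟨hp.2.2, fun hc => hp.2.1 hc.symm, hp.1⟩
  · rintro ⟨a, b⟩ _; rfl
  · rintro ⟨a, b⟩ _; rfl
  · rintro ⟨a, b⟩ _; rfl

lemma sum_pair_cancel {E : Finset ℕ} (H : ℕ → ℕ → F)
    (h : ∀ i ∈ E, ∀ j ∈ E, i ≠ j → H i j + H j i = 0) :
    ∑ i ∈ E, ∑ j ∈ E.erase i, H i j = 0 := by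
  have h2 : (∑ i ∈ E, ∑ j ∈ E.erase i, H i j) + (∑ i ∈ E, ∑ j ∈ E.erase i, H i j) = 0 := by
    nth_rewrite 2 [sum_pair_swap]
    rw [← Finset.sum_add_distrib]
    rw [Finset.sum_congr rfl fun i hi => ?_]
    · exact Finset.sum_const_zero
    rw [← Finset.sum_add_distrib]
    refine Finset.sum_eq_zero fun j hj => ?_
    rw [Finset.mem_erase] at hj
    exact h i hi j hj.2 (fun hc => hj.1 hc.symm)
  have := eq_neg_of_add_eq_zero_left h2
  -- S = -S implies S = 0
  have h3 : (2 : F) * (∑ i ∈ E, ∑ j ∈ E.erase i, H i j) = 0 := by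
    rw [two_mul, h2]
  rcases mul_eq_zero.mp h3 with h4 | h4
  · exact absurd h4 two_ne_zero
  · exact h4

end Utils
section Pairs

lemma keyp2 {K : Type*} [Field K] (a b c s : K) (h1 : b - a ≠ 0) (h2 : c - a ≠ 0)
    (h3 : b - c ≠ 0) (h4 : c - b ≠ 0) (h5 : b - s * a ≠ 0) (h6 : c - s * a ≠ 0) :
    (a - s * b) / (b - s * a) * ((b - s * a) / (b - a) * ((b - s * c) / (b - c))) *
        ((c - s * a) / (c - a))
      + s * ((b - s * c) / (b - c))
      + ((a - s * c) / (c - s * a) * ((c - s * a) / (c - a) * ((c - s * b) / (c - b))) *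
        ((b - s * a) / (b - a))
      + s * ((c - s * b) / (c - b))) = 0 := by
  rw [div_mul_div_comm, div_mul_div_comm, div_mul_div_comm, div_mul_div_comm,
    div_mul_div_comm, div_mul_div_comm, ← mul_div_assoc, ← mul_div_assoc]
  rw [div_add_div _ _ (mul_ne_zero (mul_ne_zero h5 (mul_ne_zero h1 h3)) h2) h3]
  rw [div_add_div _ _ (mul_ne_zero (mul_ne_zero h6 (mul_ne_zero h2 h4)) h1) h4]
  rw [div_add_div _ _
    (mul_ne_zero (mul_ne_zero (mul_ne_zero h5 (mul_ne_zero h1 h3)) h2) h3)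
    (mul_ne_zero (mul_ne_zero (mul_ne_zero h6 (mul_ne_zero h2 h4)) h1) h4)]
  rw [div_eq_zero_iff]
  exact Or.inl (by ring)

lemma keyp1 {K : Type*} [Field K] (a b s : K) (h1 : a - b ≠ 0) (h2 : b - a ≠ 0)
    (h3 : b - s * a ≠ 0) :
    (a - s * b) / (a - b) + (a - s * b) / (b - s * a) * ((b - s * a) / (b - a)) = 0 := by
  rw [div_mul_div_cancel₀ h3, div_add_div _ _ h1 h2, div_eq_zero_iff]
  left
  ring

lemma erase_swap' (s : Finset ℕ) (a b : ℕ) : (s.erase a).erase b = (s.erase b).erase a := by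
  ext c
  simp only [Finset.mem_erase]
  tauto

lemma pair1 (R : Finset ℕ) (h0 : 0 ∈ R) (i : ℕ) (hi : i ∈ R) (hne : i ≠ 0) :
    (∏ a ∈ R.erase 0, (x 0 - t * x a) / (x 0 - x a)) *
      (∏ a ∈ (R.erase 0).erase i, (x i - t * x a) / (x i - x a))
    + (x 0 - t * x i) / (x i - t * x 0) *
      (∏ a ∈ R.erase i, (x i - t * x a) / (x i - x a)) *
      (∏ a ∈ (R.erase i).erase 0, (x 0 - t * x a) / (x 0 - x a)) = 0 := by
  have hiR0 : i ∈ R.erase 0 := Finset.mem_erase.mpr ⟨hne, hi⟩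
  have h0Ri : 0 ∈ R.erase i := Finset.mem_erase.mpr ⟨Ne.symm hne, h0⟩
  rw [← Finset.mul_prod_erase _ _ hiR0, ← Finset.mul_prod_erase _ _ h0Ri,
    erase_swap' R i 0]
  set A : F := ∏ a ∈ (R.erase 0).erase i, (x 0 - t * x a) / (x 0 - x a)
  set B : F := ∏ a ∈ (R.erase 0).erase i, (x i - t * x a) / (x i - x a)
  have key := keyp1 (x 0) (x i) t (x_sub_x_ne_zero (Ne.symm hne))
    (x_sub_x_ne_zero hne) (x_sub_t_mul_x_ne_zero i 0)
  linear_combination (A * B) * key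

lemma pair2 (R : Finset ℕ) (h0 : 0 ∈ R) (i j : ℕ) (hi : i ∈ R) (hj : j ∈ R)
    (hi0 : i ≠ 0) (hj0 : j ≠ 0) (hij : i ≠ j) :
    ((x 0 - t * x i) / (x i - t * x 0) *
        (∏ a ∈ R.erase i, (x i - t * x a) / (x i - x a)) *
        (∏ a ∈ (R.erase i).erase j, (x j - t * x a) / (x j - x a))
      + t * (∏ a ∈ (R.erase 0).erase i, (x i - t * x a) / (x i - x a)) *
        (∏ a ∈ ((R.erase 0).erase i).erase j, (x j - t * x a) / (x j - x a)))
    + ((x 0 - t * x j) / (x j - t * x 0) *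
        (∏ a ∈ R.erase j, (x j - t * x a) / (x j - x a)) *
        (∏ a ∈ (R.erase j).erase i, (x i - t * x a) / (x i - x a))
      + t * (∏ a ∈ (R.erase 0).erase j, (x j - t * x a) / (x j - x a)) *
        (∏ a ∈ ((R.erase 0).erase j).erase i, (x i - t * x a) / (x i - x a))) = 0 := by
  have h0i : 0 ∈ R.erase i := Finset.mem_erase.mpr ⟨Ne.symm hi0, h0⟩
  have h0j : 0 ∈ R.erase j := Finset.mem_erase.mpr ⟨Ne.symm hj0, h0⟩
  have hjRi : j ∈ (R.erase 0).erase i :=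
    Finset.mem_erase.mpr ⟨Ne.symm hij, Finset.mem_erase.mpr ⟨hj0, hj⟩⟩
  have hiRj : i ∈ (R.erase 0).erase j :=
    Finset.mem_erase.mpr ⟨hij, Finset.mem_erase.mpr ⟨hi0, hi⟩⟩
  have h0ij : 0 ∈ (R.erase i).erase j :=
    Finset.mem_erase.mpr ⟨Ne.symm hj0, h0i⟩
  have h0ji : 0 ∈ (R.erase j).erase i :=
    Finset.mem_erase.mpr ⟨Ne.symm hi0, h0j⟩
  -- expand ∏ over R.erase i : peel 0 then j
  rw [← Finset.mul_prod_erase _ _ h0i, ← Finset.mul_prod_erase _ _ h0j,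
    ← Finset.mul_prod_erase _ _ h0ij, ← Finset.mul_prod_erase _ _ h0ji]
  rw [erase_swap' R i 0, erase_swap' R j 0]
  rw [← Finset.mul_prod_erase _ _ hjRi, ← Finset.mul_prod_erase _ _ hiRj]
  rw [erase_swap' (R.erase i) j 0, erase_swap' R i 0,
    erase_swap' (R.erase j) i 0, erase_swap' R j 0]
  rw [erase_swap' (R.erase 0) j i]
  set T : F := ∏ a ∈ ((R.erase 0).erase i).erase j, (x i - t * x a) / (x i - x a)
  set U : F := ∏ a ∈ ((R.erase 0).erase i).erase j, (x j - t * x a) / (x j - x a)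
  have key := keyp2 (x 0) (x i) (x j) t (x_sub_x_ne_zero hi0) (x_sub_x_ne_zero hj0)
    (x_sub_x_ne_zero hij) (x_sub_x_ne_zero (Ne.symm hij))
    (x_sub_t_mul_x_ne_zero i 0) (x_sub_t_mul_x_ne_zero j 0)
  linear_combination (T * U) * key
end Pairs

set_option maxHeartbeats 1000000 in
/-- **Lemma 2 (key recursion).** For a weakly decreasing tuple `λ` of length `n > 2`,
with `O_i = ((x_i - t x_1) x_i^{λ_1} - (x_1 - t x_i) x_1^{λ_1-λ_2} x_i^{λ_2})/(x_i - t x_1)`: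
`P_λ = Σ_{i=2}^n O_i ∏_{a≠i}(x_i-t x_a)/(x_i-x_a) ζ_i(P_{λ'})
  - x_1^{λ_1-λ_2} Σ_{2≤i≠j≤n} t x_i^{λ_2} x_j^{λ_2} ∏_{a≠1,i} ⋯ ∏_{a≠1,i,j} ⋯ ζ_{i,j}(P_{λ''})`. -/
theorem hall_littlewood_key_recursion (m : ℕ) (lam : Fin (m + 3) → ℕ)
    (hlam : ∀ i j : Fin (m + 3), i ≤ j → lam j ≤ lam i) :
    HL (m + 3) lam =
      (∑ i ∈ Finset.Icc 1 (m + 2),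
        (((x i - t * x 0) * x i ^ lam 0 -
            (x 0 - t * x i) * x 0 ^ (lam 0 - lam 1) * x i ^ lam 1) / (x i - t * x 0)) *
        (∏ a ∈ (Finset.range (m + 3)).erase i, (x i - t * x a) / (x i - x a)) *
        zeta i (HL (m + 2) (fun j => lam j.succ))) -
      x 0 ^ (lam 0 - lam 1) *
        ∑ i ∈ Finset.Icc 1 (m + 2), ∑ j ∈ (Finset.Icc 1 (m + 2)).erase i,
          t * x i ^ lam 1 * x j ^ lam 1 *
          (∏ a ∈ ((Finset.range (m + 3)).erase 0).erase i, (x i - t * x a) / (x i - x a)) *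
          (∏ a ∈ (((Finset.range (m + 3)).erase 0).erase i).erase j,
            (x j - t * x a) / (x j - x a)) *
          zetaP i j (HL (m + 1) (fun l => lam l.succ.succ)) := by
  have h01 : lam 1 ≤ lam 0 := hlam 0 1 (by
    rw [Fin.le_def]
    simp [Fin.val_zero, Fin.val_one])
  have hpow : x 0 ^ (lam 0 - lam 1) * x 0 ^ lam 1 = x 0 ^ lam 0 := by
    rw [← pow_add, Nat.sub_add_cancel h01]
  have hR0 : (Finset.range (m+3)).erase 0 = Finset.Icc 1 (m+2) := range_erase_zero (m+1)
  have h0R : (0:ℕ) ∈ Finset.range (m+3) := by simp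
  have hW : ∀ i < m + 3, zeta i (HL (m+2) (fun j => lam j.succ)) =
      ∑ j ∈ (Finset.range (m+3)).erase i,
        x j ^ lam 1 *
        (∏ a ∈ ((Finset.range (m+3)).erase i).erase j, (x j - t * x a) / (x j - x a)) *
        zetaP i j (HL (m+1) (fun l => lam l.succ.succ)) := by
    intro i hi
    have h := zeta_HL_rec (m+1) (fun j => lam j.succ) i (by omega)
    simp only [Fin.succ_zero_eq_one] at h
    exact h
  rw [HL_rec (m+2) lam]
  rw [← hR0]
  rw [← Finset.add_sum_erase _ _ h0R]
  have hsplit : ∀ i ∈ (Finset.range (m+3)).erase 0,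
      ((x i - t * x 0) * x i ^ lam 0 -
          (x 0 - t * x i) * x 0 ^ (lam 0 - lam 1) * x i ^ lam 1) / (x i - t * x 0) *
          (∏ a ∈ (Finset.range (m + 3)).erase i, (x i - t * x a) / (x i - x a)) *
          zeta i (HL (m + 2) (fun j => lam j.succ))
        = x i ^ lam 0 *
          (∏ a ∈ (Finset.range (m + 3)).erase i, (x i - t * x a) / (x i - x a)) *
          zeta i (HL (m + 2) (fun j => lam j.succ))
        - (x 0 - t * x i) / (x i - t * x 0) * (x 0 ^ (lam 0 - lam 1) * x i ^ lam 1) *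
          (∏ a ∈ (Finset.range (m + 3)).erase i, (x i - t * x a) / (x i - x a)) *
          zeta i (HL (m + 2) (fun j => lam j.succ)) := by
    intro i hi
    have hne := x_sub_t_mul_x_ne_zero i 0
    linear_combination (x i ^ lam 0 *
      (∏ a ∈ (Finset.range (m+3)).erase i, (x i - t * x a) / (x i - x a)) *
      zeta i (HL (m+2) fun j => lam j.succ)) * mul_inv_cancel₀ hne
  rw [Finset.sum_congr rfl hsplit, Finset.sum_sub_distrib]
  have key : x 0 ^ lam 0 *
      (∏ a ∈ (Finset.range (m + 3)).erase 0, (x 0 - t * x a) / (x 0 - x a)) *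
      zeta 0 (HL (m + 2) (fun j => lam j.succ))
      + (∑ i ∈ (Finset.range (m+3)).erase 0,
          (x 0 - t * x i) / (x i - t * x 0) * (x 0 ^ (lam 0 - lam 1) * x i ^ lam 1) *
          (∏ a ∈ (Finset.range (m + 3)).erase i, (x i - t * x a) / (x i - x a)) *
          zeta i (HL (m + 2) (fun j => lam j.succ)))
      + x 0 ^ (lam 0 - lam 1) *
        ∑ i ∈ (Finset.range (m+3)).erase 0, ∑ j ∈ ((Finset.range (m+3)).erase 0).erase i,
          t * x i ^ lam 1 * x j ^ lam 1 *
          (∏ a ∈ ((Finset.range (m + 3)).erase 0).erase i, (x i - t * x a) / (x i - x a)) *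
          (∏ a ∈ (((Finset.range (m + 3)).erase 0).erase i).erase j,
            (x j - t * x a) / (x j - x a)) *
          zetaP i j (HL (m + 1) (fun l => lam l.succ.succ)) = 0 := by
    have h0lt : (0:ℕ) < m + 3 := by omega
    have hgexp : ∀ i ∈ (Finset.range (m+3)).erase 0,
        (x 0 - t * x i) / (x i - t * x 0) * (x 0 ^ (lam 0 - lam 1) * x i ^ lam 1) *
        (∏ a ∈ (Finset.range (m + 3)).erase i, (x i - t * x a) / (x i - x a)) *
        zeta i (HL (m + 2) (fun j => lam j.succ))
        = ((x 0 - t * x i) / (x i - t * x 0) * (x 0 ^ (lam 0 - lam 1) * x i ^ lam 1) *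
            (∏ a ∈ (Finset.range (m + 3)).erase i, (x i - t * x a) / (x i - x a)) *
            (x 0 ^ lam 1 *
              (∏ a ∈ ((Finset.range (m+3)).erase 0).erase i,
                (x 0 - t * x a) / (x 0 - x a)) *
              zetaP i 0 (HL (m+1) (fun l => lam l.succ.succ))))
          + ∑ j ∈ ((Finset.range (m+3)).erase 0).erase i,
            (x 0 - t * x i) / (x i - t * x 0) * (x 0 ^ (lam 0 - lam 1) * x i ^ lam 1) *
            (∏ a ∈ (Finset.range (m + 3)).erase i, (x i - t * x a) / (x i - x a)) *
            (x j ^ lam 1 *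
              (∏ a ∈ ((Finset.range (m+3)).erase i).erase j,
                (x j - t * x a) / (x j - x a)) *
              zetaP i j (HL (m+1) (fun l => lam l.succ.succ))) := by
      intro i hi
      rw [Finset.mem_erase, Finset.mem_range] at hi
      have h0mem : (0:ℕ) ∈ (Finset.range (m+3)).erase i :=
        Finset.mem_erase.mpr ⟨Ne.symm hi.1, h0R⟩
      rw [hW i hi.2, ← Finset.add_sum_erase _ _ h0mem,
        erase_swap' (Finset.range (m+3)) i 0, mul_add, Finset.mul_sum]
    rw [hW 0 h0lt, Finset.sum_congr rfl hgexp]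
    simp only [Finset.mul_sum]
    rw [Finset.sum_add_distrib]
    have hz1 : ∑ i ∈ (Finset.range (m+3)).erase 0,
        ((x 0 ^ lam 0 * ∏ a ∈ (Finset.range (m + 3)).erase 0, (x 0 - t * x a) / (x 0 - x a)) *
          (x i ^ lam 1 *
            (∏ a ∈ ((Finset.range (m+3)).erase 0).erase i, (x i - t * x a) / (x i - x a)) *
            zetaP 0 i (HL (m+1) (fun l => lam l.succ.succ)))
        + (x 0 - t * x i) / (x i - t * x 0) * (x 0 ^ (lam 0 - lam 1) * x i ^ lam 1) *
            (∏ a ∈ (Finset.range (m + 3)).erase i, (x i - t * x a) / (x i - x a)) *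
            (x 0 ^ lam 1 *
              (∏ a ∈ ((Finset.range (m+3)).erase 0).erase i,
                (x 0 - t * x a) / (x 0 - x a)) *
              zetaP i 0 (HL (m+1) (fun l => lam l.succ.succ)))) = 0 := by
      refine Finset.sum_eq_zero fun i hi => ?_
      rw [Finset.mem_erase, Finset.mem_range] at hi
      have hp := pair1 (Finset.range (m+3)) h0R i (Finset.mem_range.mpr hi.2) hi.1
      rw [erase_swap' (Finset.range (m+3)) i 0] at hp
      have hzc : zetaP i 0 (HL (m+1) (fun l => lam l.succ.succ))
          = zetaP 0 i (HL (m+1) (fun l => lam l.succ.succ)) := by rw [zetaP_comm]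
      linear_combination
        (x 0 ^ lam 0 * x i ^ lam 1 * zetaP 0 i (HL (m+1) (fun l => lam l.succ.succ))) * hp
        + ((x 0 - t * x i) / (x i - t * x 0) * x i ^ lam 1 *
            (∏ a ∈ (Finset.range (m + 3)).erase i, (x i - t * x a) / (x i - x a)) *
            (∏ a ∈ ((Finset.range (m+3)).erase 0).erase i, (x 0 - t * x a) / (x 0 - x a)) *
            zetaP 0 i (HL (m+1) (fun l => lam l.succ.succ))) * hpow
        + ((x 0 - t * x i) / (x i - t * x 0) * (x 0 ^ (lam 0 - lam 1) * x i ^ lam 1) *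
            (∏ a ∈ (Finset.range (m + 3)).erase i, (x i - t * x a) / (x i - x a)) *
            (x 0 ^ lam 1 *
              ∏ a ∈ ((Finset.range (m+3)).erase 0).erase i,
                (x 0 - t * x a) / (x 0 - x a))) * hzc
    rw [Finset.sum_add_distrib] at hz1
    have hz2' : (∑ i ∈ (Finset.range (m+3)).erase 0,
          ∑ j ∈ ((Finset.range (m+3)).erase 0).erase i,
          (x 0 - t * x i) / (x i - t * x 0) * (x 0 ^ (lam 0 - lam 1) * x i ^ lam 1) *
            (∏ a ∈ (Finset.range (m + 3)).erase i, (x i - t * x a) / (x i - x a)) *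
            (x j ^ lam 1 *
              (∏ a ∈ ((Finset.range (m+3)).erase i).erase j,
                (x j - t * x a) / (x j - x a)) *
              zetaP i j (HL (m+1) (fun l => lam l.succ.succ))))
        + (∑ i ∈ (Finset.range (m+3)).erase 0,
          ∑ j ∈ ((Finset.range (m+3)).erase 0).erase i,
          x 0 ^ (lam 0 - lam 1) *
            (t * x i ^ lam 1 * x j ^ lam 1 *
              (∏ a ∈ ((Finset.range (m + 3)).erase 0).erase i, (x i - t * x a) / (x i - x a)) *
              (∏ a ∈ (((Finset.range (m + 3)).erase 0).erase i).erase j,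
                (x j - t * x a) / (x j - x a)) *
              zetaP i j (HL (m + 1) (fun l => lam l.succ.succ)))) = 0 := by
      rw [← Finset.sum_add_distrib]
      rw [Finset.sum_congr rfl fun i _ => (Finset.sum_add_distrib).symm]
      refine sum_pair_cancel _ fun i hi j hj hij => ?_
      rw [Finset.mem_erase, Finset.mem_range] at hi hj
      have hp := pair2 (Finset.range (m+3)) h0R i j (Finset.mem_range.mpr hi.2)
        (Finset.mem_range.mpr hj.2) hi.1 hj.1 hij
      have hzc : zetaP j i (HL (m+1) (fun l => lam l.succ.succ))
          = zetaP i j (HL (m+1) (fun l => lam l.succ.succ)) := by rw [zetaP_comm]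
      linear_combination
        (x 0 ^ (lam 0 - lam 1) * x i ^ lam 1 * x j ^ lam 1 *
          zetaP i j (HL (m+1) (fun l => lam l.succ.succ))) * hp
        + ((x 0 - t * x j) / (x j - t * x 0) * (x 0 ^ (lam 0 - lam 1) * x i ^ lam 1 * x j ^ lam 1) *
            (∏ a ∈ (Finset.range (m + 3)).erase j, (x j - t * x a) / (x j - x a)) *
            (∏ a ∈ ((Finset.range (m+3)).erase j).erase i, (x i - t * x a) / (x i - x a))
          + x 0 ^ (lam 0 - lam 1) * t * x i ^ lam 1 * x j ^ lam 1 *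
            (∏ a ∈ ((Finset.range (m + 3)).erase 0).erase j, (x j - t * x a) / (x j - x a)) *
            (∏ a ∈ (((Finset.range (m + 3)).erase 0).erase j).erase i,
              (x i - t * x a) / (x i - x a))) * hzc
    linear_combination hz1 + hz2'
  linear_combination key

end
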